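/- For all integers k ≥ 0 and s ≥ 1, setting μ = 16 + 2k + s, the following inequality of rational numbers holds: (7/8 − 3/2)² + (11/8 − 3/2)² + (13/8 − 3/2)² + (17/8 − 3/2)² + ∑_{u=1}^{2k+8} ((u + 2k + 9)/(2k+9) − 3/2)² + ∑_{v=1}^{s+4} ((2v + 2s + 7)/(2(s+4)) − 3/2)² ≤ (μ/12)·(17/8 − 7/8). -/
import Mathlib

lemma sumsq_aux (c : ℚ) (N : ℕ) :
    ∑ u ∈ Finset.Icc 1 N, ((u : ℚ) - c) ^ 2
      = (N : ℚ) * (N + 1) * (2 * N + 1) / 6 - c * N * (N + 1) + N * c ^ 2 := by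
  induction N with
  | zero => simp
  | succ n ih =>
    rw [Finset.sum_Icc_succ_top (by omega), ih]
    push_cast
    ring

theorem stmt_7 (k s : ℕ) (hs : 1 ≤ s) :
    ((7/8 : ℚ) - 3/2) ^ 2 +
      ((11/8 : ℚ) - 3/2) ^ 2 +
      ((13/8 : ℚ) - 3/2) ^ 2 +
      ((17/8 : ℚ) - 3/2) ^ 2 +
      ∑ u ∈ Finset.Icc 1 (2 * k + 8), (((u : ℚ) + 2 * (k : ℚ) + 9) / (2 * (k : ℚ) + 9) - 3/2) ^ 2 +
      ∑ v ∈ Finset.Icc 1 (s + 4), ((2 * (v : ℚ) + 2 * (s : ℚ) + 7) / (2 * ((s : ℚ) + 4)) - 3/2) ^ 2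
    ≤ ((16 + 2 * (k : ℚ) + (s : ℚ)) / 12) * (17/8 - 7/8) := by
  have hd : (0:ℚ) < 2 * (k:ℚ) + 9 := by positivity
  have hm : (0:ℚ) < (s:ℚ) + 4 := by positivity
  have h1 : ∑ u ∈ Finset.Icc 1 (2 * k + 8),
      (((u : ℚ) + 2 * (k : ℚ) + 9) / (2 * (k : ℚ) + 9) - 3/2) ^ 2
      = (∑ u ∈ Finset.Icc 1 (2 * k + 8), ((u : ℚ) - (2 * (k:ℚ) + 9)/2) ^ 2)
        / (2 * (k:ℚ) + 9) ^ 2 := by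
    rw [Finset.sum_div]
    apply Finset.sum_congr rfl
    intro u _
    field_simp
    ring
  have h2 : ∑ v ∈ Finset.Icc 1 (s + 4),
      ((2 * (v : ℚ) + 2 * (s : ℚ) + 7) / (2 * ((s : ℚ) + 4)) - 3/2) ^ 2
      = (∑ v ∈ Finset.Icc 1 (s + 4), ((v : ℚ) - ((s:ℚ) + 5)/2) ^ 2)
        / ((s:ℚ) + 4) ^ 2 := by
    rw [Finset.sum_div]
    apply Finset.sum_congr rfl
    intro v _
    field_simp
    ring
  rw [h1, h2, sumsq_aux, sumsq_aux]
  have hcast1 : ((2 * k + 8 : ℕ) : ℚ) = 2 * (k:ℚ) + 8 := by push_cast; ring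
  have hcast2 : ((s + 4 : ℕ) : ℚ) = (s:ℚ) + 4 := by push_cast; ring
  rw [hcast1, hcast2]
  have hs' : (1:ℚ) ≤ (s:ℚ) := by exact_mod_cast hs
  have hk : (0:ℚ) ≤ (k:ℚ) := Nat.cast_nonneg k
  set d : ℚ := 2 * (k:ℚ) + 9 with hdef
  set m : ℚ := (s:ℚ) + 4 with hmef
  have hnum : (0:ℚ) ≤ d^2*m + d*m^2 - 12*d*m - 8*m + 4*d := by
    have hd9 : (9:ℚ) ≤ d := by rw [hdef]; linarith
    have hm5 : (5:ℚ) ≤ m := by rw [hmef]; linarith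
    nlinarith [mul_pos hd hm, mul_nonneg (le_trans (by norm_num) hd9) (le_trans (by norm_num) hm5)]
  have hdiff : ((16 + 2 * (k : ℚ) + (s : ℚ)) / 12) * (17/8 - 7/8)
      - ((7/8 - 3/2) ^ 2 + ((11/8:ℚ) - 3/2) ^ 2 + ((13/8:ℚ) - 3/2) ^ 2 + ((17/8:ℚ) - 3/2) ^ 2
        + ((2 * (k:ℚ) + 8) * (2 * (k:ℚ) + 8 + 1) * (2 * (2 * (k:ℚ) + 8) + 1) / 6 -
              (2 * (k:ℚ) + 9) / 2 * (2 * (k:ℚ) + 8) * (2 * (k:ℚ) + 8 + 1) +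
            (2 * (k:ℚ) + 8) * ((2 * (k:ℚ) + 9) / 2) ^ 2) / (2 * (k:ℚ) + 9) ^ 2
        + (((s:ℚ) + 4) * ((s:ℚ) + 4 + 1) * (2 * ((s:ℚ) + 4) + 1) / 6 -
              ((s:ℚ) + 5) / 2 * ((s:ℚ) + 4) * ((s:ℚ) + 4 + 1) +
            ((s:ℚ) + 4) * (((s:ℚ) + 5) / 2) ^ 2) / ((s:ℚ) + 4) ^ 2)
      = (d^2*m + d*m^2 - 12*d*m - 8*m + 4*d) / (48 * d * m) := by
    rw [hdef, hmef]
    field_simp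
    ring
  have hpos : (0:ℚ) < 48 * d * m := by positivity
  have := div_nonneg hnum hpos.le
  rw [hdef, hmef] at *
  linarith [hdiff, this]
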